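/- For any real a > 0 and positive integer n, ∑_{k=1}^{n} ψ₀(k+a)ψ₁(k+a) = (a+n)ψ₀(a+n+1)ψ₁(a+n+1) − aψ₀(a+1)ψ₁(a+1) − (1/2)(2a+2n+1)ψ₁(a+n+1) + (1/2)(2a+1)ψ₁(a+1) + (1/2)ψ₀(a+n+1)² − ψ₀(a+n+1) − (1/2)ψ₀(a+1)² + ψ₀(a+1). -/

import Mathlib

open Finset

/-- The `m`-th polygamma function: the `(m+1)`-th derivative of `log ∘ Γ`. -/
noncomputable def psi (m : ℕ) (x : ℝ) : ℝ :=
  iteratedDeriv (m + 1) (fun y => Real.log (Real.Gamma y)) x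

lemma logGamma_analyticAt {x : ℝ} (hx : 0 < x) :
    AnalyticAt ℝ (fun y => Real.log (Real.Gamma y)) x := by
  have hG : AnalyticAt ℂ Complex.Gamma (x : ℂ) := by
    refine DifferentiableOn.analyticAt (s := {z : ℂ | 0 < z.re}) ?_ ?_
    · intro z hz
      have hz' : ∀ m : ℕ, z ≠ -m := by
        intro m h
        rw [h] at hz
        simp only [Set.mem_setOf_eq, Complex.neg_re, Complex.natCast_re] at hz
        have : (0:ℝ) ≤ m := m.cast_nonneg
        linarith
      exact (Complex.differentiableAt_Gamma z hz').differentiableWithinAt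
    · exact (isOpen_lt continuous_const Complex.continuous_re).mem_nhds (by simpa using hx)
  have hGx : Complex.Gamma (x:ℂ) = (Real.Gamma x : ℂ) := Complex.Gamma_ofReal x
  have hpos : 0 < Real.Gamma x := Real.Gamma_pos_of_pos hx
  have hC : AnalyticAt ℂ (fun z => Complex.log (Complex.Gamma z)) (x:ℂ) := by
    refine hG.clog ?_
    rw [hGx]
    exact Complex.ofReal_mem_slitPlane.2 hpos
  have h1 : AnalyticAt ℝ (fun y : ℝ => (Complex.log (Complex.Gamma (y:ℂ))).re) x := by
    exact (Complex.reCLM.analyticAt _).comp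
      ((hC.restrictScalars (𝕜' := ℂ)).comp (Complex.ofRealCLM.analyticAt x))
  refine h1.congr ?_
  filter_upwards [Ioi_mem_nhds hx] with y hy
  have hy' : 0 < Real.Gamma y := Real.Gamma_pos_of_pos hy
  rw [Complex.Gamma_ofReal, ← Complex.ofReal_log hy'.le, Complex.ofReal_re]

lemma deriv_logGamma_rec {x : ℝ} (hx : 0 < x) :
    deriv (fun y => Real.log (Real.Gamma y)) (x + 1) =
      deriv (fun y => Real.log (Real.Gamma y)) x + 1 / x := by
  have h1 : deriv (fun y => Real.log (Real.Gamma y)) (x + 1) =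
      deriv (fun y => Real.log (Real.Gamma (y + 1))) x := (deriv_comp_add_const _ _ _).symm
  rw [h1]
  have h2 : (fun y => Real.log (Real.Gamma (y + 1))) =ᶠ[nhds x]
      (fun y => Real.log (Real.Gamma y) + Real.log y) := by
    filter_upwards [Ioi_mem_nhds hx] with y hy
    rw [Real.Gamma_add_one (ne_of_gt hy),
      Real.log_mul (ne_of_gt hy) (Real.Gamma_pos_of_pos hy).ne', add_comm]
  rw [h2.deriv_eq, deriv_fun_add ((logGamma_analyticAt hx).differentiableAt)
    (Real.differentiableAt_log hx.ne'), Real.deriv_log, one_div]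

lemma deriv2_logGamma_rec {x : ℝ} (hx : 0 < x) :
    deriv (deriv (fun y => Real.log (Real.Gamma y))) (x + 1) =
      deriv (deriv (fun y => Real.log (Real.Gamma y))) x - 1 / x ^ 2 := by
  set g := deriv (fun y => Real.log (Real.Gamma y)) with hg
  have hfan : AnalyticOnNhd ℝ (fun y => Real.log (Real.Gamma y)) (Set.Ioi 0) :=
    fun y hy => logGamma_analyticAt hy
  have hgan : AnalyticOnNhd ℝ g (Set.Ioi 0) := hfan.deriv_of_isOpen isOpen_Ioi
  have h1 : deriv g (x + 1) = deriv (fun y => g (y + 1)) x := (deriv_comp_add_const _ _ _).symm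
  rw [h1]
  have h2 : (fun y => g (y + 1)) =ᶠ[nhds x] (fun y => g y + y⁻¹) := by
    filter_upwards [Ioi_mem_nhds hx] with y hy
    rw [hg, deriv_logGamma_rec hy, one_div]
  rw [h2.deriv_eq, deriv_fun_add ((hgan x hx).differentiableAt) (differentiableAt_inv hx.ne'),
    deriv_inv]
  ring

lemma psi0_rec {x : ℝ} (hx : 0 < x) : psi 0 (x + 1) = psi 0 x + 1 / x := by
  simpa [psi, iteratedDeriv_one] using deriv_logGamma_rec hx

lemma psi1_rec {x : ℝ} (hx : 0 < x) : psi 1 (x + 1) = psi 1 x - 1 / x ^ 2 := by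
  have h : ∀ y : ℝ, psi 1 y = deriv (deriv (fun y => Real.log (Real.Gamma y))) y := by
    intro y
    rw [psi, iteratedDeriv_succ, iteratedDeriv_one]
  rw [h, h]
  exact deriv2_logGamma_rec hx

lemma stmt_aux (a : ℝ) (ha : 0 < a) (n : ℕ) :
    ∑ k ∈ Icc 1 n, psi 0 ((k : ℝ) + a) * psi 1 ((k : ℝ) + a) =
      (a + n) * psi 0 (a + n + 1) * psi 1 (a + n + 1) - a * psi 0 (a + 1) * psi 1 (a + 1) -
        (1/2) * (2*a + 2*n + 1) * psi 1 (a + n + 1) + (1/2) * (2*a + 1) * psi 1 (a + 1) +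
        (1/2) * (psi 0 (a + n + 1))^2 - psi 0 (a + n + 1) - (1/2) * (psi 0 (a + 1))^2 +
        psi 0 (a + 1) := by
  induction n with
  | zero => simp
  | succ n IH =>
    rw [Finset.sum_Icc_succ_top (by omega : 1 ≤ n + 1), IH]
    have hc : (0:ℝ) < a + n + 1 := by positivity
    have h0 := psi0_rec hc
    have h1 := psi1_rec hc
    push_cast
    rw [show (n:ℝ) + 1 + a = a + n + 1 by ring,
      show a + ((n:ℝ) + 1) + 1 = (a + n + 1) + 1 by ring]
    rw [h0, h1]
    field_simp
    ring

theorem stmt_5 (a : ℝ) (ha : 0 < a) (n : ℕ) (hn : 0 < n) :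
    ∑ k ∈ Icc 1 n, psi 0 ((k : ℝ) + a) * psi 1 ((k : ℝ) + a) =
      (a + n) * psi 0 (a + n + 1) * psi 1 (a + n + 1) - a * psi 0 (a + 1) * psi 1 (a + 1) -
        (1/2) * (2*a + 2*n + 1) * psi 1 (a + n + 1) + (1/2) * (2*a + 1) * psi 1 (a + 1) +
        (1/2) * (psi 0 (a + n + 1))^2 - psi 0 (a + n + 1) - (1/2) * (psi 0 (a + 1))^2 + psi 0 (a + 1) := by
  exact stmt_aux a ha n
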